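/- arXiv:1911.12321 — 2 statements merged into one kernel-verified Lean document; each statement's English description precedes it below -/
import Mathlib

section
/- Let X ∈ ℝ^{m×(d+1)} have full column rank, write X = (y | X') where y ∈ ℝᵐ is the first column and X' ∈ ℝ^{m×d} the remaining columns, and let φ = (X'ᵀX')⁻¹X'ᵀy be the least-squares coefficients of regressing y on X', with residual r = y - X'φ. Then the leverage scores satisfy ℓ_X(i) = ℓ_{X'}(i) + r(i)²/‖r‖² for every row index i. (In particular ‖r‖ > 0 since X has full column rank.) -/
open Matrix

private lemma mul_vecMulVec' {l m n : Type*} [Fintype m] (B : Matrix l m ℝ) (u : m → ℝ)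
    (v : n → ℝ) : B * vecMulVec u v = vecMulVec (B *ᵥ u) v := by
  ext i j
  simp [mul_apply, vecMulVec_apply, mulVec, dotProduct, Finset.sum_mul, mul_assoc]

private lemma vecMulVec_mul' {l m n : Type*} [Fintype m] (u : l → ℝ) (v : m → ℝ)
    (B : Matrix m n ℝ) : vecMulVec u v * B = vecMulVec u (v ᵥ* B) := by
  ext i j
  simp [mul_apply, vecMulVec_apply, vecMul, dotProduct, Finset.mul_sum, mul_assoc]

private lemma vecMulVec_smul_left {m n : Type*} (c : ℝ) (u : m → ℝ) (v : n → ℝ) :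
    vecMulVec (c • u) v = c • vecMulVec u v := by
  ext i j; simp [vecMulVec_apply, mul_assoc]

private lemma vecMulVec_add_right {m n : Type*} (u : m → ℝ) (v w : n → ℝ) :
    vecMulVec u (v + w) = vecMulVec u v + vecMulVec u w := by
  ext i j; simp [vecMulVec_apply, mul_add]


/-- Leverage score recursion: `ℓ_X(i) = ℓ_{X'}(i) + r(i)²/‖r‖²` where `X = (y | X')`
and `r` is the residual of regressing `y` on `X'`. -/
theorem leverage_score_recursion {m d : ℕ} (X : Matrix (Fin m) (Fin (d + 1)) ℝ)
    (hX : X.rank = d + 1) :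
    let y : Fin m → ℝ := fun i => X i 0
    let X' : Matrix (Fin m) (Fin d) ℝ := Matrix.of fun i j => X i j.succ
    let φ := (X'ᵀ * X')⁻¹ *ᵥ (X'ᵀ *ᵥ y)
    let r := y - X' *ᵥ φ
    0 < ∑ t, r t ^ 2 ∧
      ∀ i, (X * (Xᵀ * X)⁻¹ * Xᵀ) i i =
        (X' * (X'ᵀ * X')⁻¹ * X'ᵀ) i i + r i ^ 2 / ∑ t, r t ^ 2 := by
  intro y X' φ r
  have hy : y = fun i => X i 0 := rfl
  have hX'def : X' = Matrix.of fun i j => X i j.succ := rfl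
  have hφdef : φ = (X'ᵀ * X')⁻¹ *ᵥ (X'ᵀ *ᵥ y) := rfl
  have hrdef : r = y - X' *ᵥ φ := rfl
  set A := X'ᵀ * X' with hAdef
  -- X is injective
  have hinj : Function.Injective X.mulVec := by
    have h1 : LinearMap.ker X.mulVecLin = ⊥ := by
      have h2 := LinearMap.finrank_range_add_finrank_ker X.mulVecLin
      rw [Module.finrank_fintype_fun_eq_card, Fintype.card_fin] at h2
      have h3 : Module.finrank ℝ (LinearMap.ker X.mulVecLin) = 0 := by
        have h4 : X.rank = Module.finrank ℝ (LinearMap.range X.mulVecLin) := rfl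
        omega
      exact Submodule.finrank_eq_zero.mp h3
    exact LinearMap.ker_eq_bot.mp h1
  have hcons : ∀ (a : ℝ) (v : Fin d → ℝ), X *ᵥ Fin.cons a v = a • y + X' *ᵥ v := by
    intro a v; funext i
    simp only [mulVec, dotProduct, Fin.sum_univ_succ, Fin.cons_zero, Fin.cons_succ,
      Pi.add_apply, Pi.smul_apply, smul_eq_mul, hy, hX'def, of_apply]
    ring_nf
  -- X' is injective
  have hinj' : ∀ v : Fin d → ℝ, X' *ᵥ v = 0 → v = 0 := by
    intro v hv
    have h1 : X *ᵥ Fin.cons (0 : ℝ) v = X *ᵥ 0 := by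
      rw [hcons, hv, Matrix.mulVec_zero]; simp
    have h2 := hinj h1
    funext j
    have := congrFun h2 j.succ
    simpa using this
  -- A is invertible
  have hAunit : IsUnit A := by
    rw [← Matrix.mulVec_injective_iff_isUnit]
    intro v w hvw
    have h0 : A *ᵥ (v - w) = 0 := by
      rw [Matrix.mulVec_sub, hvw, sub_self]
    have h1 : (X' *ᵥ (v - w)) ⬝ᵥ (X' *ᵥ (v - w)) = 0 := by
      have : (v - w) ⬝ᵥ (A *ᵥ (v - w)) = 0 := by rw [h0, dotProduct_zero]
      rwa [hAdef, ← Matrix.mulVec_mulVec, dotProduct_mulVec, vecMul_transpose] at this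
    have h2 : X' *ᵥ (v - w) = 0 := dotProduct_self_eq_zero.mp h1
    have := hinj' _ h2
    exact sub_eq_zero.mp this
  have hAdet : IsUnit A.det := (Matrix.isUnit_iff_isUnit_det A).mp hAunit
  have hA1 : A * A⁻¹ = 1 := Matrix.mul_nonsing_inv A hAdet
  have hA2 : A⁻¹ * A = 1 := Matrix.nonsing_inv_mul A hAdet
  have hAsymm : Aᵀ = A := by rw [hAdef, Matrix.transpose_mul, Matrix.transpose_transpose]
  have hAinvSymm : A⁻¹ᵀ = A⁻¹ := by rw [Matrix.transpose_nonsing_inv, hAsymm]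
  have hφ : A *ᵥ φ = X'ᵀ *ᵥ y := by
    rw [hφdef, Matrix.mulVec_mulVec, hA1, Matrix.one_mulVec]
  have hX'r : X'ᵀ *ᵥ r = 0 := by
    rw [hrdef, Matrix.mulVec_sub, Matrix.mulVec_mulVec, ← hAdef, hφ, sub_self]
  set u : Fin (d + 1) → ℝ := Fin.cons 1 (-φ) with hudef
  have hru : X *ᵥ u = r := by
    rw [hudef, hcons, Matrix.mulVec_neg, one_smul, hrdef, sub_eq_add_neg]
  have hrne : r ≠ 0 := by
    intro h
    have h1 : X *ᵥ u = X *ᵥ 0 := by rw [hru, h, Matrix.mulVec_zero]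
    have h2 := congrFun (hinj h1) 0
    simp [hudef] at h2
  have hsne : r ⬝ᵥ r ≠ 0 := fun h => hrne (dotProduct_self_eq_zero.mp h)
  have hs : ∑ t, r t ^ 2 = r ⬝ᵥ r := by simp [dotProduct, sq]
  have hspos : 0 < ∑ t, r t ^ 2 := by
    rw [hs]
    rcases lt_or_eq_of_le (Finset.sum_nonneg fun i _ => mul_self_nonneg (r i)) with h | h
    · exact h
    · exact absurd h.symm hsne
  refine ⟨hspos, ?_⟩
  set e₀ : Fin (d + 1) → ℝ := Fin.cons 1 0 with he₀
  have hyr : y ⬝ᵥ r = r ⬝ᵥ r := by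
    have h0 : (X' *ᵥ φ) ⬝ᵥ r = 0 := by
      rw [dotProduct_comm, dotProduct_mulVec, ← Matrix.mulVec_transpose, hX'r,
        zero_dotProduct]
    have h1 : r ⬝ᵥ r = y ⬝ᵥ r - (X' *ᵥ φ) ⬝ᵥ r := by
      conv_lhs => rw [hrdef]
      rw [sub_dotProduct]
    rw [h1, h0, sub_zero]
  have hXtr : Xᵀ *ᵥ r = (r ⬝ᵥ r) • e₀ := by
    funext j
    refine Fin.cases ?_ ?_ j
    · have : (Xᵀ *ᵥ r) 0 = y ⬝ᵥ r := by
        simp [mulVec, dotProduct, hy, transpose_apply, mul_comm]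
      rw [this, hyr]; simp [he₀]
    · intro k
      have h1 : (Xᵀ *ᵥ r) k.succ = (X'ᵀ *ᵥ r) k := by
        simp [mulVec, dotProduct, hX'def, transpose_apply]
      rw [h1, hX'r]; simp [he₀]
  set F : Matrix (Fin (d + 1)) (Fin d) ℝ :=
    Matrix.of fun j k => if j = k.succ then (1 : ℝ) else 0 with hFdef
  have hXF : X * F = X' := by
    ext i k
    simp only [mul_apply, hFdef, of_apply, mul_ite, mul_one, mul_zero, hX'def]
    rw [Finset.sum_ite_eq' Finset.univ k.succ (fun j => X i j)]
    simp
  have hXT : Xᵀ = vecMulVec e₀ y + F * X'ᵀ := by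
    ext j i
    refine Fin.cases ?_ ?_ j
    · simp [vecMulVec_apply, he₀, hy, mul_apply, hFdef, Fin.succ_ne_zero, eq_comm]
    · intro a
      simp [vecMulVec_apply, he₀, mul_apply, hFdef, Fin.succ_inj, hX'def]
  have hFφ : ∀ v : Fin d → ℝ, F *ᵥ v = Fin.cons 0 v := by
    intro v
    funext j
    refine Fin.cases ?_ ?_ j
    · simp [mulVec, dotProduct, hFdef, Fin.succ_ne_zero, eq_comm]
    · intro a
      simp [mulVec, dotProduct, hFdef, Fin.succ_inj]
  have hFF : vecMulVec e₀ e₀ + F * Fᵀ = 1 := by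
    ext j k
    refine Fin.cases ?_ ?_ j <;> [skip; intro a] <;> refine Fin.cases ?_ ?_ k <;>
      try intro b
    · simp [vecMulVec_apply, he₀, mul_apply, hFdef, Fin.succ_ne_zero, eq_comm]
    · simp [vecMulVec_apply, he₀, mul_apply, hFdef, Fin.succ_ne_zero, eq_comm,
        (Fin.succ_ne_zero b).symm]
    · simp [vecMulVec_apply, he₀, mul_apply, hFdef, Fin.succ_ne_zero, eq_comm]
    · simp [vecMulVec_apply, he₀, mul_apply, hFdef, Fin.succ_inj, one_apply, eq_comm]
  set M : Matrix (Fin (d + 1)) (Fin (d + 1)) ℝ :=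
    (r ⬝ᵥ r)⁻¹ • vecMulVec u u + F * A⁻¹ * Fᵀ with hMdef
  have hGM : Xᵀ * X * M = 1 := by
    have t1 : Xᵀ * X * ((r ⬝ᵥ r)⁻¹ • vecMulVec u u) = vecMulVec e₀ u := by
      rw [Matrix.mul_smul, Matrix.mul_assoc, mul_vecMulVec', hru, mul_vecMulVec', hXtr,
        vecMulVec_smul_left, smul_smul, inv_mul_cancel₀ hsne, one_smul]
    have t2 : Xᵀ * X * (F * A⁻¹ * Fᵀ) = vecMulVec e₀ (Fin.cons 0 φ) + F * Fᵀ := by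
      have s1 : Xᵀ * X * F = vecMulVec e₀ (y ᵥ* X') + F * A := by
        rw [Matrix.mul_assoc, hXF, hXT, Matrix.add_mul, vecMulVec_mul', hAdef]
        rw [Matrix.mul_assoc]
      have s2 : (y ᵥ* X') ᵥ* A⁻¹ = φ := by
        rw [Matrix.vecMul_vecMul, ← Matrix.mulVec_transpose, Matrix.transpose_mul, hAinvSymm,
          ← Matrix.mulVec_mulVec, hφdef]
      calc Xᵀ * X * (F * A⁻¹ * Fᵀ) = (Xᵀ * X * F) * A⁻¹ * Fᵀ := by
            simp only [Matrix.mul_assoc]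
        _ = (vecMulVec e₀ (y ᵥ* X') + F * A) * A⁻¹ * Fᵀ := by rw [s1]
        _ = vecMulVec e₀ (((y ᵥ* X') ᵥ* A⁻¹) ᵥ* Fᵀ) + F * (A * A⁻¹) * Fᵀ := by
            rw [Matrix.add_mul, Matrix.add_mul, vecMulVec_mul', vecMulVec_mul']
            simp only [Matrix.mul_assoc]
        _ = vecMulVec e₀ (Fin.cons 0 φ) + F * Fᵀ := by
            rw [s2, hA1, Matrix.mul_one, Matrix.vecMul_transpose, hFφ]
    rw [hMdef, Matrix.mul_add, t1, t2, ← add_assoc, ← vecMulVec_add_right]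
    have : u + Fin.cons 0 φ = e₀ := by
      funext j
      refine Fin.cases ?_ ?_ j
      · simp [hudef, he₀]
      · intro a; simp [hudef, he₀]
    rw [this, hFF]
  have hInv : (Xᵀ * X)⁻¹ = M := Matrix.inv_eq_right_inv hGM
  intro i
  have hfinal : X * M * Xᵀ = (r ⬝ᵥ r)⁻¹ • vecMulVec r r + X' * A⁻¹ * X'ᵀ := by
    have hFX : Fᵀ * Xᵀ = X'ᵀ := by rw [← Matrix.transpose_mul, hXF]
    calc X * M * Xᵀ
        = (r ⬝ᵥ r)⁻¹ • (X * vecMulVec u u * Xᵀ) + X * (F * A⁻¹ * Fᵀ) * Xᵀ := by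
          rw [hMdef, Matrix.mul_add, Matrix.add_mul, Matrix.mul_smul, Matrix.smul_mul]
      _ = (r ⬝ᵥ r)⁻¹ • vecMulVec r r + X' * A⁻¹ * X'ᵀ := by
          rw [mul_vecMulVec', hru, vecMulVec_mul', Matrix.vecMul_transpose, hru]
          congr 1
          calc X * (F * A⁻¹ * Fᵀ) * Xᵀ = (X * F) * A⁻¹ * (Fᵀ * Xᵀ) := by
                simp only [Matrix.mul_assoc]
            _ = X' * A⁻¹ * X'ᵀ := by rw [hXF, hFX, Matrix.mul_assoc]
  rw [hInv, hfinal]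
  simp only [Matrix.add_apply, Matrix.smul_apply, vecMulVec_apply, smul_eq_mul, hs]
  rw [sq, div_eq_inv_mul]
  ring
end

section
/- Let X ∈ ℝ^{m×(d+1)} have full column rank, X = (y | X'), with exact OLS coefficients φ = (X'ᵀX')⁻¹X'ᵀy, exact residual r = y - X'φ, and approximate coefficients φ̃ ∈ ℝ^d with residual r̃ = y - X'φ̃. Suppose (i) ‖r̃‖ ≤ (1+ε)‖r‖, (ii) ‖φ - φ̃‖ ≤ √ε·η·‖φ‖ for constants ε ∈ (0,1), η ≥ 0, and define the approximate leverage scores ℓ̃(i) := ℓ_{X'}(i) + r̃(i)²/‖r̃‖². Then for every i, |ℓ_X(i) - ℓ̃(i)| ≤ (1 + 3·η·κ(X)²)·√ε·ℓ_X(i), where κ(X) is the spectral condition number of X. -/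
open Matrix

variable {n : ℕ}

lemma quad_decomp (U : Matrix (Fin n) (Fin n) ℝ) (f : Fin n → ℝ) (v : Fin n → ℝ) :
    v ⬝ᵥ ((U * diagonal f * Uᵀ) *ᵥ v) = ∑ j, f j * ((Uᵀ *ᵥ v) j)^2 := by
  rw [← mulVec_mulVec, ← mulVec_mulVec, dotProduct_mulVec, ← mulVec_transpose]
  simp [dotProduct, mulVec_diagonal]
  exact Finset.sum_congr rfl fun x _ => by ring

section spec
variable {A : Matrix (Fin (n+1)) (Fin (n+1)) ℝ} (hA : A.IsHermitian)

noncomputable def Umat (hA : A.IsHermitian) : Matrix (Fin (n+1)) (Fin (n+1)) ℝ :=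
  (hA.eigenvectorUnitary : Matrix (Fin (n+1)) (Fin (n+1)) ℝ)

lemma Umat_mul_transpose : Umat hA * (Umat hA)ᵀ = 1 := by
  have h := (Matrix.mem_unitaryGroup_iff).mp hA.eigenvectorUnitary.2
  rwa [star_eq_conjTranspose, conjTranspose_eq_transpose_of_trivial] at h

lemma transpose_mul_Umat : (Umat hA)ᵀ * Umat hA = 1 := by
  have h := (Matrix.mem_unitaryGroup_iff').mp hA.eigenvectorUnitary.2
  rwa [star_eq_conjTranspose, conjTranspose_eq_transpose_of_trivial] at h

lemma spec_decomp : A = Umat hA * diagonal hA.eigenvalues * (Umat hA)ᵀ := by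
  have h := hA.spectral_theorem
  rw [Unitary.conjStarAlgAut_apply, star_eq_conjTranspose,
    conjTranspose_eq_transpose_of_trivial] at h
  simpa [Umat, RCLike.ofReal_real_eq_id] using h

lemma Umat_norm (v : Fin (n+1) → ℝ) : ∑ j, ((Umat hA)ᵀ *ᵥ v) j ^ 2 = ∑ i, v i ^ 2 := by
  have h1 : ((Umat hA)ᵀ *ᵥ v) ⬝ᵥ ((Umat hA)ᵀ *ᵥ v) = v ⬝ᵥ v := by
    rw [dotProduct_mulVec, ← mulVec_transpose, mulVec_mulVec, transpose_transpose,
      Umat_mul_transpose, one_mulVec]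
  simpa [dotProduct, pow_two] using h1

lemma quad_lower (v : Fin (n+1) → ℝ) :
    (⨅ j, hA.eigenvalues j) * (∑ i, v i ^ 2) ≤ v ⬝ᵥ (A *ᵥ v) := by
  conv_rhs => rw [spec_decomp hA, quad_decomp]
  rw [← Umat_norm hA v, Finset.mul_sum]
  refine Finset.sum_le_sum fun j _ => ?_
  exact mul_le_mul_of_nonneg_right (ciInf_le (Finite.bddBelow_range _) j) (sq_nonneg _)

lemma quad_upper (v : Fin (n+1) → ℝ) :
    v ⬝ᵥ (A *ᵥ v) ≤ (⨆ j, hA.eigenvalues j) * (∑ i, v i ^ 2) := by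
  conv_lhs => rw [spec_decomp hA, quad_decomp]
  rw [← Umat_norm hA v, Finset.mul_sum]
  refine Finset.sum_le_sum fun j _ => ?_
  exact mul_le_mul_of_nonneg_right (le_ciSup (Finite.bddAbove_range _) j) (sq_nonneg _)

lemma lmin_pos (hpd : A.PosDef) : 0 < ⨅ j, hA.eigenvalues j := by
  obtain ⟨j0, hj0⟩ := Finite.exists_min hA.eigenvalues
  have h1 : hA.eigenvalues j0 ≤ ⨅ j, hA.eigenvalues j := le_ciInf hj0
  exact lt_of_lt_of_le (hpd.eigenvalues_pos j0) h1

lemma lmin_le_lmax : (⨅ j, hA.eigenvalues j) ≤ ⨆ j, hA.eigenvalues j :=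
  le_trans (ciInf_le (Finite.bddBelow_range _) 0) (le_ciSup (Finite.bddAbove_range _) 0)

lemma inv_decomp (hpd : A.PosDef) :
    A⁻¹ = Umat hA * diagonal (fun j => (hA.eigenvalues j)⁻¹) * (Umat hA)ᵀ := by
  refine inv_eq_right_inv ?_
  have step : A * (Umat hA * diagonal (fun j => (hA.eigenvalues j)⁻¹) * (Umat hA)ᵀ)
      = (Umat hA * diagonal hA.eigenvalues * (Umat hA)ᵀ) *
        (Umat hA * diagonal (fun j => (hA.eigenvalues j)⁻¹) * (Umat hA)ᵀ) := by
    rw [← spec_decomp hA]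
  rw [step]
  have h : (Umat hA * diagonal hA.eigenvalues * (Umat hA)ᵀ) *
      (Umat hA * diagonal (fun j => (hA.eigenvalues j)⁻¹) * (Umat hA)ᵀ)
      = Umat hA * (diagonal hA.eigenvalues * diagonal (fun j => (hA.eigenvalues j)⁻¹)) *
        (Umat hA)ᵀ := by
    simp only [mul_assoc]
    rw [← mul_assoc ((Umat hA)ᵀ), transpose_mul_Umat hA, one_mul]
  rw [h, diagonal_mul_diagonal]
  have : (fun j => hA.eigenvalues j * (hA.eigenvalues j)⁻¹) = fun _ => (1:ℝ) := by
    funext j; exact mul_inv_cancel₀ (ne_of_gt (hpd.eigenvalues_pos j))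
  rw [this, diagonal_one, mul_one, Umat_mul_transpose]

lemma inv_quad_lower (hpd : A.PosDef) (v : Fin (n+1) → ℝ) :
    (⨆ j, hA.eigenvalues j)⁻¹ * (∑ i, v i ^ 2) ≤ v ⬝ᵥ (A⁻¹ *ᵥ v) := by
  have hb : ∀ j, 0 < hA.eigenvalues j := hpd.eigenvalues_pos
  have hmax : 0 < ⨆ j, hA.eigenvalues j := lt_of_lt_of_le (lmin_pos hA hpd) (lmin_le_lmax hA)
  conv_rhs => rw [inv_decomp hA hpd, quad_decomp]
  rw [← Umat_norm hA v, Finset.mul_sum]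
  refine Finset.sum_le_sum fun j _ => ?_
  refine mul_le_mul_of_nonneg_right ?_ (sq_nonneg _)
  exact inv_anti₀ (hb j) (le_ciSup (Finite.bddAbove_range _) j)

end spec

section main
variable {m d : ℕ}

lemma mulVec_inj {X : Matrix (Fin m) (Fin (d+1)) ℝ} (hX : X.rank = d + 1) :
    Function.Injective X.mulVec := by
  have h1 : LinearMap.ker X.mulVecLin = ⊥ := by
    have h2 := X.mulVecLin.finrank_range_add_finrank_ker
    rw [show Module.finrank ℝ (LinearMap.range X.mulVecLin) = d + 1 from hX] at h2
    simp only [Module.finrank_pi, Fintype.card_fin] at h2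
    have : Module.finrank ℝ (LinearMap.ker X.mulVecLin) = 0 := by omega
    exact Submodule.finrank_eq_zero.mp this
  intro a b hab
  have h3 : X.mulVecLin a = X.mulVecLin b := by simpa [mulVecLin_apply] using hab
  exact LinearMap.ker_eq_bot.mp h1 h3

lemma posdef_gram {k : ℕ} (M : Matrix (Fin m) (Fin k) ℝ) (hinj : Function.Injective M.mulVec) :
    (Mᵀ * M).PosDef := by
  refine posDef_iff_dotProduct_mulVec.mpr ⟨?_, ?_⟩
  · have h := isHermitian_conjTranspose_mul_self M
    rwa [conjTranspose_eq_transpose_of_trivial] at h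
  · intro x hx
    have h1 : star x ⬝ᵥ (Mᵀ * M) *ᵥ x = (M *ᵥ x) ⬝ᵥ (M *ᵥ x) := by
      rw [← mulVec_mulVec, dotProduct_mulVec, ← mulVec_transpose, transpose_transpose]
      simp [star_trivial]
    rw [h1]
    have hMx : M *ᵥ x ≠ 0 := by
      intro h
      exact hx (hinj (by simpa [mulVec_zero] using h))
    have h2 : (M *ᵥ x) ⬝ᵥ (M *ᵥ x) ≠ 0 := fun h => hMx (dotProduct_self_eq_zero.mp h)
    have h3 : 0 ≤ (M *ᵥ x) ⬝ᵥ (M *ᵥ x) := by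
      simp only [dotProduct]
      exact Finset.sum_nonneg fun i _ => mul_self_nonneg _
    exact lt_of_le_of_ne h3 (Ne.symm h2)
end main

section central
variable {m d : ℕ}

def yv (X : Matrix (Fin m) (Fin (d+1)) ℝ) : Fin m → ℝ := fun i => X i 0

def Xp (X : Matrix (Fin m) (Fin (d+1)) ℝ) : Matrix (Fin m) (Fin d) ℝ :=
  Matrix.of fun i j => X i j.succ

noncomputable def phiv (X : Matrix (Fin m) (Fin (d+1)) ℝ) : Fin d → ℝ :=
  ((Xp X)ᵀ * Xp X)⁻¹ *ᵥ ((Xp X)ᵀ *ᵥ yv X)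

noncomputable def rv (X : Matrix (Fin m) (Fin (d+1)) ℝ) : Fin m → ℝ :=
  yv X - Xp X *ᵥ phiv X

variable (X : Matrix (Fin m) (Fin (d+1)) ℝ)

lemma mulVec_cons (c : ℝ) (w : Fin d → ℝ) :
    X *ᵥ (Fin.cons c w) = c • yv X + Xp X *ᵥ w := by
  funext i
  simp only [mulVec, dotProduct, Fin.sum_univ_succ, Fin.cons_zero, Fin.cons_succ,
    Pi.add_apply, Pi.smul_apply, smul_eq_mul, yv, Xp, Matrix.of_apply]
  ring_nf

lemma Xp_inj (hX : X.rank = d + 1) : Function.Injective (Xp X).mulVec := by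
  intro a b hab
  have h : X *ᵥ (Fin.cons 0 a) = X *ᵥ (Fin.cons 0 b) := by
    rw [mulVec_cons, mulVec_cons, hab]
  have := mulVec_inj hX h
  have h2 : ∀ j : Fin d, a j = b j := fun j => by
    have := congr_fun this j.succ
    simpa using this
  exact funext h2

lemma A_pd (hX : X.rank = d + 1) : (Xᵀ * X).PosDef :=
  posdef_gram X (mulVec_inj hX)

lemma B_pd (hX : X.rank = d + 1) : ((Xp X)ᵀ * Xp X).PosDef :=
  posdef_gram (Xp X) (Xp_inj X hX)

lemma B_mul_inv (hX : X.rank = d + 1) : ((Xp X)ᵀ * Xp X) * ((Xp X)ᵀ * Xp X)⁻¹ = 1 :=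
  mul_nonsing_inv _ ((Matrix.isUnit_iff_isUnit_det _).mp (B_pd X hX).isUnit)

lemma A_inv_mul (hX : X.rank = d + 1) : (Xᵀ * X)⁻¹ * (Xᵀ * X) = 1 :=
  nonsing_inv_mul _ ((Matrix.isUnit_iff_isUnit_det _).mp (A_pd X hX).isUnit)

lemma normal_eq (hX : X.rank = d + 1) : (Xp X)ᵀ *ᵥ rv X = 0 := by
  have h : (Xp X)ᵀ *ᵥ (Xp X *ᵥ phiv X) = (Xp X)ᵀ *ᵥ yv X := by
    rw [mulVec_mulVec, phiv, mulVec_mulVec, B_mul_inv X hX, one_mulVec]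
  rw [rv, mulVec_sub, h, sub_self]

lemma rv_eq : rv X = X *ᵥ (Fin.cons 1 (-(phiv X))) := by
  rw [mulVec_cons, rv, one_smul, mulVec_neg]
  funext i; simp [sub_eq_add_neg]

lemma rt_eq (φt : Fin d → ℝ) : yv X - Xp X *ᵥ φt = X *ᵥ (Fin.cons 1 (-φt)) := by
  rw [mulVec_cons, one_smul, mulVec_neg]
  funext i; simp [sub_eq_add_neg]

end central

section hat
variable {m d : ℕ} (X : Matrix (Fin m) (Fin (d+1)) ℝ)

lemma R2_pos (hX : X.rank = d + 1) : 0 < ∑ i, rv X i ^ 2 := by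
  have hu : (Fin.cons 1 (-(phiv X)) : Fin (d+1) → ℝ) ≠ 0 := by
    intro h
    have := congr_fun h 0
    simp at this
  have hr0 : rv X ≠ 0 := by
    rw [rv_eq]
    intro h
    exact hu (mulVec_inj hX (by simpa using h))
  have h1 : rv X ⬝ᵥ rv X ≠ 0 := fun h => hr0 (dotProduct_self_eq_zero.mp h)
  have h2 : 0 ≤ rv X ⬝ᵥ rv X := by
    simp only [dotProduct]
    exact Finset.sum_nonneg fun i _ => mul_self_nonneg _
  have h3 : rv X ⬝ᵥ rv X = ∑ i, rv X i ^ 2 := by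
    simp [dotProduct, pow_two]
  rw [← h3]
  exact lt_of_le_of_ne h2 (Ne.symm h1)

lemma hat_recursion (hX : X.rank = d + 1) :
    X * (Xᵀ * X)⁻¹ * Xᵀ =
      Xp X * ((Xp X)ᵀ * Xp X)⁻¹ * (Xp X)ᵀ
        + (∑ i, rv X i ^ 2)⁻¹ • vecMulVec (rv X) (rv X) := by
  set B := (Xp X)ᵀ * Xp X with hB
  set r := rv X with hrdef
  set c : ℝ := (∑ i, rv X i ^ 2)⁻¹ with hc
  set P : Matrix (Fin m) (Fin m) ℝ := Xp X * B⁻¹ * (Xp X)ᵀ + c • vecMulVec r r with hP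
  have hR2 : (∑ i, rv X i ^ 2) ≠ 0 := ne_of_gt (R2_pos X hX)
  have hBsymm : Bᵀ = B := by
    have := isHermitian_conjTranspose_mul_self (Xp X)
    rw [conjTranspose_eq_transpose_of_trivial] at this
    rwa [IsHermitian, conjTranspose_eq_transpose_of_trivial] at this
  have hBinv_symm : (B⁻¹)ᵀ = B⁻¹ := by rw [transpose_nonsing_inv, hBsymm]
  have hPsymm : Pᵀ = P := by
    rw [hP, transpose_add, transpose_smul]
    congr 1
    · rw [transpose_mul, transpose_mul, transpose_transpose, hBinv_symm, Matrix.mul_assoc]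
    · congr 1
      ext i j
      simp [vecMulVec_apply, transpose_apply, mul_comm]
  -- P annihilates things correctly
  have hnormal : (Xp X)ᵀ *ᵥ r = 0 := normal_eq X hX
  have hvmvr : vecMulVec r r *ᵥ r = (∑ i, rv X i ^ 2) • r := by
    funext i
    simp only [mulVec, dotProduct, vecMulVec_apply, Pi.smul_apply, smul_eq_mul]
    rw [Finset.sum_mul]
    exact Finset.sum_congr rfl fun t _ => by rw [hrdef]; ring
  have hHp_r : (Xp X * B⁻¹ * (Xp X)ᵀ) *ᵥ r = 0 := by
    rw [← mulVec_mulVec, hnormal, ← mulVec_mulVec, mulVec_zero, mulVec_zero]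
  have hP_r : P *ᵥ r = r := by
    rw [hP, add_mulVec, hHp_r, smul_mulVec, hvmvr, zero_add, smul_smul,
      hc, inv_mul_cancel₀ hR2, one_smul]
  have hvmv_Xp : vecMulVec r r * Xp X = 0 := by
    ext i j
    simp only [mul_apply, vecMulVec_apply, Matrix.zero_apply]
    have h1 : ∑ t, r i * r t * Xp X t j = r i * ((Xp X)ᵀ *ᵥ r) j := by
      simp only [mulVec, dotProduct, transpose_apply, Finset.mul_sum]
      exact Finset.sum_congr rfl fun t _ => by ring
    rw [h1, hnormal]
    simp
  have hP_Xp : P * Xp X = Xp X := by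
    have hBiB : B⁻¹ * ((Xp X)ᵀ * Xp X) = 1 := by
      rw [← hB]
      exact nonsing_inv_mul B ((Matrix.isUnit_iff_isUnit_det _).mp (B_pd X hX).isUnit)
    rw [hP, Matrix.add_mul, Matrix.smul_mul, hvmv_Xp, smul_zero, add_zero]
    simp only [Matrix.mul_assoc]
    rw [hBiB, Matrix.mul_one]
  have hy_decomp : yv X = Xp X *ᵥ phiv X + r := by
    rw [hrdef, rv]; funext i; simp
  have hP_y : P *ᵥ yv X = yv X := by
    rw [hy_decomp, mulVec_add, hP_r, mulVec_mulVec, hP_Xp]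
  have hP_X : P * X = X := by
    ext i k
    refine Fin.cases ?_ ?_ k
    · exact congr_fun hP_y i
    · intro j
      have := congr_fun (congr_fun hP_Xp i) j
      simpa [mul_apply, mulVec, dotProduct, Xp, yv] using this
  have hXtP : Xᵀ * P = Xᵀ := by
    calc Xᵀ * P = Xᵀ * Pᵀ := by rw [hPsymm]
    _ = (P * X)ᵀ := by rw [transpose_mul]
    _ = Xᵀ := by rw [hP_X]
  -- P = X * N
  set E : Matrix (Fin (d+1)) (Fin d) ℝ := Matrix.of fun k j => if k = j.succ then 1 else 0 with hE
  have hXE : X * E = Xp X := by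
    ext i j
    simp only [mul_apply, hE, Matrix.of_apply, Xp, mul_ite, mul_one, mul_zero]
    rw [Finset.sum_ite_eq' Finset.univ (j.succ : Fin (d+1)) (fun k => X i k)]
    simp
  set u : Fin (d+1) → ℝ := Fin.cons 1 (-(phiv X)) with hu
  have hXu : X *ᵥ u = r := (rv_eq X).symm
  have hXvmv : X * vecMulVec u r = vecMulVec r r := by
    rw [← hXu]
    ext i t
    simp only [mul_apply, vecMulVec_apply, mulVec, dotProduct, Finset.sum_mul]
    exact Finset.sum_congr rfl fun k _ => by ring
  set N : Matrix (Fin (d+1)) (Fin m) ℝ := E * B⁻¹ * (Xp X)ᵀ + c • vecMulVec u r with hN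
  have hPXN : P = X * N := by
    rw [hN, Matrix.mul_add, Matrix.mul_smul, ← Matrix.mul_assoc, ← Matrix.mul_assoc, hXE,
      hXvmv, hP]
  -- conclude
  have hAinvA : (Xᵀ * X)⁻¹ * (Xᵀ * X) = 1 := A_inv_mul X hX
  have e1 : (X * (Xᵀ * X)⁻¹ * Xᵀ) * P = X * (Xᵀ * X)⁻¹ * Xᵀ := by
    rw [Matrix.mul_assoc (X * (Xᵀ * X)⁻¹), hXtP]
  have e2 : (X * (Xᵀ * X)⁻¹ * Xᵀ) * P = P := by
    rw [hPXN, Matrix.mul_assoc (X * (Xᵀ * X)⁻¹), ← Matrix.mul_assoc Xᵀ,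
      Matrix.mul_assoc X, ← Matrix.mul_assoc (Xᵀ * X)⁻¹, hAinvA, Matrix.one_mul]
  rw [← e1, e2, hP, hrdef, hc]

lemma diag_quad {k : ℕ} (M : Matrix (Fin m) (Fin k) ℝ) (S : Matrix (Fin k) (Fin k) ℝ)
    (i : Fin m) :
    (M * S * Mᵀ) i i = (fun t => M i t) ⬝ᵥ (S *ᵥ fun t => M i t) := by
  simp only [mul_apply, transpose_apply, mulVec, dotProduct, Finset.sum_mul, Finset.mul_sum]
  rw [Finset.sum_comm]
  exact Finset.sum_congr rfl fun a _ => Finset.sum_congr rfl fun b _ => by ring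

lemma cs_sq {k : ℕ} (M : Matrix (Fin m) (Fin k) ℝ) (w : Fin k → ℝ) (i : Fin m) :
    ((M *ᵥ w) i) ^ 2 ≤ (∑ j, M i j ^ 2) * (∑ j, w j ^ 2) := by
  simpa [mulVec, dotProduct] using
    Finset.sum_mul_sq_le_sq_mul_sq Finset.univ (fun j => M i j) w

lemma Hp_diag_nonneg (hX : X.rank = d + 1) (i : Fin m) :
    0 ≤ (Xp X * ((Xp X)ᵀ * Xp X)⁻¹ * (Xp X)ᵀ) i i := by
  rw [diag_quad]
  have := (B_pd X hX).inv.posSemidef.re_dotProduct_nonneg (fun t => Xp X i t)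
  simpa using this

lemma row_le_H (hX : X.rank = d + 1) (hH : (Xᵀ * X).IsHermitian) (i : Fin m) :
    ∑ k, X i k ^ 2 ≤ (⨆ j, hH.eigenvalues j) * (X * (Xᵀ * X)⁻¹ * Xᵀ) i i := by
  have hmax : 0 < ⨆ j, hH.eigenvalues j :=
    lt_of_lt_of_le (lmin_pos hH (A_pd X hX)) (lmin_le_lmax hH)
  have h := inv_quad_lower hH (A_pd X hX) (fun t => X i t)
  rw [← diag_quad] at h
  calc ∑ k, X i k ^ 2
      = (⨆ j, hH.eigenvalues j) * ((⨆ j, hH.eigenvalues j)⁻¹ * ∑ k, X i k ^ 2) := by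
        rw [← mul_assoc, mul_inv_cancel₀ (ne_of_gt hmax), one_mul]
    _ ≤ (⨆ j, hH.eigenvalues j) * (X * (Xᵀ * X)⁻¹ * Xᵀ) i i :=
        mul_le_mul_of_nonneg_left h (le_of_lt hmax)

lemma H_diag_nonneg (hX : X.rank = d + 1) (i : Fin m) :
    0 ≤ (X * (Xᵀ * X)⁻¹ * Xᵀ) i i := by
  rw [diag_quad]
  have := (A_pd X hX).inv.posSemidef.re_dotProduct_nonneg (fun t => X i t)
  simpa using this

lemma sumsq_lower (hX : X.rank = d + 1) (hH : (Xᵀ * X).IsHermitian) (v : Fin (d+1) → ℝ) :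
    (⨅ j, hH.eigenvalues j) * (∑ k, v k ^ 2) ≤ ∑ i, (X *ᵥ v) i ^ 2 := by
  have h1 : ∑ i, (X *ᵥ v) i ^ 2 = v ⬝ᵥ ((Xᵀ * X) *ᵥ v) := by
    rw [← mulVec_mulVec, dotProduct_mulVec, ← mulVec_transpose, transpose_transpose]
    simp [dotProduct, pow_two]
  rw [h1]
  exact quad_lower hH v

end hat

lemma s_poly_key {s : ℝ} (h0 : 0 ≤ s) (h1 : s < 1) : (1 - s) * (1 + s^2)^2 ≤ 1 := by
  nlinarith [mul_nonneg h0 (sq_nonneg (1-s)), sq_nonneg (s-1/2),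
    mul_nonneg (mul_nonneg h0 (mul_nonneg h0 h0)) (sq_nonneg (s-1/2)),
    mul_nonneg h0 (mul_nonneg h0 h0)]

lemma sq_add_le_two (a b : ℝ) : (a+b)^2 ≤ 2*(a^2+b^2) := by nlinarith [sq_nonneg (a-b)]
set_option maxHeartbeats 1000000 in
/-- Relative error bound for quasi-approximate leverage scores (deterministic form). -/
theorem quasi_approximate_leverage_relative_error {m d : ℕ}
    (X : Matrix (Fin m) (Fin (d + 1)) ℝ) (hX : X.rank = d + 1)
    (hH : (Xᵀ * X).IsHermitian) (ε η : ℝ) (hε0 : 0 < ε) (hε1 : ε < 1) (hη : 0 ≤ η)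
    (φt : Fin d → ℝ) :
    let y : Fin m → ℝ := fun i => X i 0
    let X' : Matrix (Fin m) (Fin d) ℝ := Matrix.of fun i j => X i j.succ
    let φ := (X'ᵀ * X')⁻¹ *ᵥ (X'ᵀ *ᵥ y)
    let r := y - X' *ᵥ φ
    let rt := y - X' *ᵥ φt
    let κ := Real.sqrt ((⨆ j, hH.eigenvalues j) / (⨅ j, hH.eigenvalues j))
    Real.sqrt (∑ i, rt i ^ 2) ≤ (1 + ε) * Real.sqrt (∑ i, r i ^ 2) →
    Real.sqrt (∑ j, (φ j - φt j) ^ 2) ≤ Real.sqrt ε * η * Real.sqrt (∑ j, φ j ^ 2) →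
    ∀ i, |(X * (Xᵀ * X)⁻¹ * Xᵀ) i i -
        ((X' * (X'ᵀ * X')⁻¹ * X'ᵀ) i i + rt i ^ 2 / ∑ t, rt t ^ 2)| ≤
      (1 + 3 * η * κ ^ 2) * Real.sqrt ε * (X * (Xᵀ * X)⁻¹ * Xᵀ) i i := by
  intro y X' φ r rt κ h1 h2 i
  have hy : y = yv X := rfl
  have hX' : X' = Xp X := rfl
  have hφ : φ = phiv X := rfl
  have hr : r = rv X := rfl
  have hrt : rt = yv X - Xp X *ᵥ φt := rfl
  simp only [hy, hX', hφ, hr, hrt] at h1 h2 ⊢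
  set lmin := ⨅ j, hH.eigenvalues j with hlmin
  set lmax := ⨆ j, hH.eigenvalues j with hlmax
  have hlmin0 : 0 < lmin := lmin_pos hH (A_pd X hX)
  have hlmax0 : 0 < lmax := lt_of_lt_of_le hlmin0 (lmin_le_lmax hH)
  have hml : lmin ≤ lmax := lmin_le_lmax hH
  have hκ2 : κ ^ 2 = lmax / lmin :=
    Real.sq_sqrt (le_of_lt (div_pos hlmax0 hlmin0))
  have hκ1 : 1 ≤ κ := Real.one_le_sqrt.mpr ((one_le_div hlmin0).mpr hml)
  set s := Real.sqrt ε with hs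
  have hs2 : s ^ 2 = ε := Real.sq_sqrt (le_of_lt hε0)
  have hs0 : 0 < s := Real.sqrt_pos.mpr hε0
  have hs1 : s < 1 := by
    rw [show (1:ℝ) = Real.sqrt 1 by simp [Real.sqrt_one]]
    exact Real.sqrt_lt_sqrt (le_of_lt hε0) hε1
  -- basic quantities
  set a := rv X i with ha
  set b := (yv X - Xp X *ᵥ φt) i with hb
  set R2 := ∑ t, rv X t ^ 2 with hR2
  set T2 := ∑ t, (yv X - Xp X *ᵥ φt) t ^ 2 with hT2
  set ℓ := (X * (Xᵀ * X)⁻¹ * Xᵀ) i i with hℓ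
  set ℓ' := (Xp X * ((Xp X)ᵀ * Xp X)⁻¹ * (Xp X)ᵀ) i i with hℓ'
  have hR2pos : 0 < R2 := R2_pos X hX
  -- recursion
  have hrec : ℓ = ℓ' + a ^ 2 / R2 := by
    have h := congr_fun (congr_fun (hat_recursion X hX) i) i
    rw [hℓ, hℓ', h]
    simp only [Matrix.add_apply, Matrix.smul_apply, vecMulVec_apply, smul_eq_mul]
    rw [ha, hR2]
    ring
  have hℓ'0 : 0 ≤ ℓ' := Hp_diag_nonneg X hX i
  have hℓ0 : 0 ≤ ℓ := H_diag_nonneg X hX i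
  have ha2 : a ^ 2 ≤ ℓ * R2 := by
    have : a ^ 2 / R2 ≤ ℓ := by rw [hrec]; linarith
    calc a ^ 2 = (a^2 / R2) * R2 := by field_simp
    _ ≤ ℓ * R2 := mul_le_mul_of_nonneg_right this (le_of_lt hR2pos)
  -- orthogonal decomposition of rt
  set Δ : Fin d → ℝ := phiv X - φt with hΔ
  have hrtdecomp : (yv X - Xp X *ᵥ φt) = rv X + Xp X *ᵥ Δ := by
    rw [hΔ, mulVec_sub, rv]
    funext t
    simp only [Pi.add_apply, Pi.sub_apply]
    ring
  have hcross : rv X ⬝ᵥ (Xp X *ᵥ Δ) = 0 := by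
    rw [dotProduct_mulVec, ← mulVec_transpose, normal_eq X hX, zero_dotProduct]
  have hT2decomp : T2 = R2 + ∑ t, (Xp X *ᵥ Δ) t ^ 2 := by
    rw [hT2, hrtdecomp, hR2]
    have hexp : ∀ t : Fin m, (rv X + Xp X *ᵥ Δ) t ^ 2
        = rv X t ^ 2 + (Xp X *ᵥ Δ) t ^ 2 + 2 * (rv X t * (Xp X *ᵥ Δ) t) := by
      intro t; simp only [Pi.add_apply]; ring
    simp only [hexp, Finset.sum_add_distrib, ← Finset.mul_sum]
    have : ∑ t, rv X t * (Xp X *ᵥ Δ) t = rv X ⬝ᵥ (Xp X *ᵥ Δ) := rfl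
    rw [this, hcross]
    ring
  have hesq_nonneg : 0 ≤ ∑ t, (Xp X *ᵥ Δ) t ^ 2 :=
    Finset.sum_nonneg fun t _ => sq_nonneg _
  have hR2T2 : R2 ≤ T2 := by rw [hT2decomp]; linarith
  have hT2pos : 0 < T2 := lt_of_lt_of_le hR2pos hR2T2
  have hT2le : T2 ≤ (1 + ε)^2 * R2 := by
    have h1' : Real.sqrt T2 ≤ (1 + ε) * Real.sqrt R2 := h1
    have hT2eq : T2 = Real.sqrt T2 ^ 2 := (Real.sq_sqrt hT2pos.le).symm
    calc T2 = Real.sqrt T2 ^ 2 := hT2eq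
    _ ≤ ((1 + ε) * Real.sqrt R2)^2 := by
        apply pow_le_pow_left₀ (Real.sqrt_nonneg _) h1'
    _ = (1 + ε)^2 * R2 := by
        rw [mul_pow, Real.sq_sqrt hR2pos.le]
  -- coordinatewise bounds
  have hrt_u : yv X - Xp X *ᵥ φt = X *ᵥ (Fin.cons 1 (-φt)) := rt_eq X φt
  have hsum_ut : ∑ k, (Fin.cons 1 (-φt) : Fin (d+1) → ℝ) k ^ 2 = 1 + ∑ j, φt j ^ 2 := by
    rw [Fin.sum_univ_succ]
    simp
  have hsum_u : ∑ k, (Fin.cons 1 (-(phiv X)) : Fin (d+1) → ℝ) k ^ 2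
      = 1 + ∑ j, phiv X j ^ 2 := by
    rw [Fin.sum_univ_succ]
    simp
  have hrow : ∑ k, X i k ^ 2 ≤ lmax * ℓ := row_le_H X hX hH i
  have hrow_nonneg : (0:ℝ) ≤ ∑ k, X i k ^ 2 := Finset.sum_nonneg fun k _ => sq_nonneg _
  have hb2 : b ^ 2 ≤ lmax * ℓ * (1 + ∑ j, φt j ^ 2) := by
    have hbe : b = (X *ᵥ (Fin.cons 1 (-φt))) i := by rw [hb, hrt_u]
    have := cs_sq X (Fin.cons 1 (-φt)) i
    rw [hsum_ut] at this
    rw [hbe]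
    calc (X *ᵥ Fin.cons 1 (-φt)) i ^ 2 ≤ (∑ k, X i k ^ 2) * (1 + ∑ j, φt j ^ 2) := this
    _ ≤ lmax * ℓ * (1 + ∑ j, φt j ^ 2) := by
        apply mul_le_mul_of_nonneg_right hrow
        positivity
  have hT2low : lmin * (1 + ∑ j, φt j ^ 2) ≤ T2 := by
    have := sumsq_lower X hX hH (Fin.cons 1 (-φt))
    rw [hsum_ut] at this
    rw [hT2, hrt_u]
    exact this
  have hR2low : lmin * (1 + ∑ j, phiv X j ^ 2) ≤ R2 := by
    have := sumsq_lower X hX hH (Fin.cons 1 (-(phiv X)))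
    rw [hsum_u] at this
    rw [hR2]
    simpa [← rv_eq X] using this
  have hb2T : b ^ 2 ≤ κ^2 * ℓ * T2 := by
    have step : lmax * ℓ * (1 + ∑ j, φt j ^ 2)
        = (lmax / lmin) * ℓ * (lmin * (1 + ∑ j, φt j ^ 2)) := by
      field_simp
    rw [hκ2]
    calc b ^ 2 ≤ lmax * ℓ * (1 + ∑ j, φt j ^ 2) := hb2
    _ = (lmax / lmin) * ℓ * (lmin * (1 + ∑ j, φt j ^ 2)) := step
    _ ≤ (lmax / lmin) * ℓ * T2 := by
        apply mul_le_mul_of_nonneg_left hT2low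
        positivity
  -- bound on (b - a)
  have hΔ2 : ∑ j, Δ j ^ 2 ≤ ε * η^2 * ∑ j, phiv X j ^ 2 := by
    have hΔsum_nonneg : (0:ℝ) ≤ ∑ j, Δ j ^ 2 := Finset.sum_nonneg fun j _ => sq_nonneg _
    have h2' : Real.sqrt (∑ j, Δ j ^ 2) ≤ s * η * Real.sqrt (∑ j, phiv X j ^ 2) := by
      simpa [hΔ, hs] using h2
    calc ∑ j, Δ j ^ 2 = Real.sqrt (∑ j, Δ j ^ 2) ^ 2 := (Real.sq_sqrt hΔsum_nonneg).symm
    _ ≤ (s * η * Real.sqrt (∑ j, phiv X j ^ 2))^2 := by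
        apply pow_le_pow_left₀ (Real.sqrt_nonneg _) h2'
    _ = ε * η^2 * ∑ j, phiv X j ^ 2 := by
        rw [mul_pow, mul_pow, hs2, Real.sq_sqrt (Finset.sum_nonneg fun j _ => sq_nonneg _)]
  have hrowsub : ∑ j, Xp X i j ^ 2 ≤ ∑ k, X i k ^ 2 := by
    have h0 : ∑ k, X i k ^ 2 = X i 0 ^ 2 + ∑ j : Fin d, X i j.succ ^ 2 :=
      Fin.sum_univ_succ _
    have h1' : ∑ j : Fin d, Xp X i j ^ 2 = ∑ j : Fin d, X i j.succ ^ 2 :=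
      Finset.sum_congr rfl fun j _ => rfl
    rw [h1', h0]
    linarith [sq_nonneg (X i 0)]
  have hba : (b - a)^2 ≤ κ^2 * ℓ * (s^2 * η^2) * T2 := by
    have hbae : b - a = (Xp X *ᵥ Δ) i := by
      rw [hb, ha, hrtdecomp]
      simp
    have hcs := cs_sq (Xp X) Δ i
    have step1 : (b - a)^2 ≤ (∑ k, X i k ^ 2) * (∑ j, Δ j ^ 2) := by
      rw [hbae]
      exact le_trans hcs (mul_le_mul_of_nonneg_right hrowsub
        (Finset.sum_nonneg fun j _ => sq_nonneg _))
    have step2 : (∑ k, X i k ^ 2) * (∑ j, Δ j ^ 2)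
        ≤ (lmax * ℓ) * (ε * η^2 * ∑ j, phiv X j ^ 2) :=
      mul_le_mul hrow hΔ2 (Finset.sum_nonneg fun j _ => sq_nonneg _)
        (by positivity)
    have step3 : lmin * ∑ j, phiv X j ^ 2 ≤ T2 := by
      have h1'' : (∑ j, phiv X j ^ 2) ≤ 1 + ∑ j, phiv X j ^ 2 := by linarith
      have := mul_le_mul_of_nonneg_left h1'' hlmin0.le
      linarith [hR2low, hR2T2]
    have step4 : (lmax * ℓ) * (ε * η^2 * ∑ j, phiv X j ^ 2)
        = (lmax/lmin) * ℓ * (ε * η^2) * (lmin * ∑ j, phiv X j ^ 2) := by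
      field_simp
    rw [hκ2, hs2]
    calc (b-a)^2 ≤ (lmax * ℓ) * (ε * η^2 * ∑ j, phiv X j ^ 2) := le_trans step1 step2
    _ = (lmax/lmin) * ℓ * (ε * η^2) * (lmin * ∑ j, phiv X j ^ 2) := step4
    _ ≤ (lmax/lmin) * ℓ * (ε * η^2) * T2 := by
        apply mul_le_mul_of_nonneg_left step3
        positivity
  -- final arithmetic
  have hκ0 : (0:ℝ) < κ := lt_of_lt_of_le one_pos hκ1
  have hκsq1 : (1:ℝ) ≤ κ^2 := by
    calc (1:ℝ) = 1*1 := by ring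
    _ ≤ κ*κ := mul_le_mul hκ1 hκ1 zero_le_one (le_trans zero_le_one hκ1)
    _ = κ^2 := (sq κ).symm
  have ha2T : a^2 ≤ κ^2 * ℓ * T2 := by
    have h1'' : a^2 ≤ ℓ * T2 := le_trans ha2 (mul_le_mul_of_nonneg_left hR2T2 hℓ0)
    have h2'' : ℓ * T2 ≤ κ^2 * (ℓ * T2) :=
      le_mul_of_one_le_left (mul_nonneg hℓ0 hT2pos.le) hκsq1
    have h3'' : κ^2 * (ℓ * T2) = κ^2 * ℓ * T2 := by ring
    linarith
  have hTmR : T2 - R2 ≤ s * T2 := by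
    have hh := mul_le_mul_of_nonneg_left hT2le (by linarith : (0:ℝ) ≤ 1 - s)
    have hkey : (1 - s) * (1 + ε)^2 ≤ 1 := by
      rw [← hs2]; exact s_poly_key hs0.le hs1
    have h3 : (1-s)*((1+ε)^2*R2) = ((1-s)*(1+ε)^2)*R2 := by ring
    have h4 : ((1-s)*(1+ε)^2)*R2 ≤ 1*R2 := mul_le_mul_of_nonneg_right hkey hR2pos.le
    have h5 : (1-s)*T2 = T2 - s*T2 := by ring
    linarith
  have hN1 : a^2 * (T2 - R2) ≤ s * ℓ * (R2 * T2) := by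
    have h0 : 0 ≤ T2 - R2 := by linarith
    calc a^2*(T2-R2) ≤ (ℓ*R2)*(s*T2) :=
        mul_le_mul ha2 hTmR h0 (mul_nonneg hℓ0 hR2pos.le)
    _ = s*ℓ*(R2*T2) := by ring
  have habs : |a^2 - b^2| ≤ 2*s*η*κ^2*ℓ*T2 := by
    have hsq : (a^2 - b^2)^2 ≤ (2*s*η*κ^2*ℓ*T2)^2 := by
      have e1 : (a^2-b^2)^2 = (b-a)^2 * (a+b)^2 := by ring
      have e2 : (a+b)^2 ≤ 2*(a^2+b^2) := sq_add_le_two a b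
      have e3 : a^2 + b^2 ≤ 2*(κ^2*ℓ*T2) := by linarith [ha2T, hb2T]
      have e4 : (a+b)^2 ≤ 4*(κ^2*ℓ*T2) := by linarith
      have e5 : (b-a)^2 * (a+b)^2 ≤ (κ^2*ℓ*(s^2*η^2)*T2) * (4*(κ^2*ℓ*T2)) :=
        mul_le_mul hba e4 (sq_nonneg _) (by positivity)
      calc (a^2-b^2)^2 = (b-a)^2*(a+b)^2 := e1
      _ ≤ (κ^2*ℓ*(s^2*η^2)*T2) * (4*(κ^2*ℓ*T2)) := e5
      _ = (2*s*η*κ^2*ℓ*T2)^2 := by ring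
    have hrhs0 : (0:ℝ) ≤ 2*s*η*κ^2*ℓ*T2 := by positivity
    calc |a^2 - b^2| = Real.sqrt ((a^2-b^2)^2) := (Real.sqrt_sq_eq_abs _).symm
    _ ≤ Real.sqrt ((2*s*η*κ^2*ℓ*T2)^2) := Real.sqrt_le_sqrt hsq
    _ = 2*s*η*κ^2*ℓ*T2 := Real.sqrt_sq hrhs0
  have hgoal2 : |a^2 * T2 - R2 * b^2| ≤ (1 + 3*η*κ^2) * s * ℓ * (R2*T2) := by
    have hid : a^2*T2 - R2*b^2 = a^2*(T2-R2) + (a^2-b^2)*R2 := by ring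
    have h1'' : |a^2*T2 - R2*b^2| ≤ a^2*(T2-R2) + |a^2-b^2| * R2 := by
      rw [hid]
      calc |a^2*(T2-R2) + (a^2-b^2)*R2| ≤ |a^2*(T2-R2)| + |(a^2-b^2) * R2| := abs_add_le _ _
      _ = a^2*(T2-R2) + |a^2-b^2| * R2 := by
          rw [abs_of_nonneg (mul_nonneg (sq_nonneg a) (by linarith : (0:ℝ) ≤ T2 - R2)),
            abs_mul, abs_of_nonneg hR2pos.le]
    have h2'' : |a^2-b^2| * R2 ≤ 2*s*η*κ^2*ℓ*T2*R2 :=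
      mul_le_mul_of_nonneg_right habs hR2pos.le
    have h3'' : (0:ℝ) ≤ η*(κ^2*(s*(ℓ*(R2*T2)))) := by positivity
    have h4'' : (1 + 3*η*κ^2) * s * ℓ * (R2*T2)
        = s*ℓ*(R2*T2) + 2*s*η*κ^2*ℓ*T2*R2 + η*(κ^2*(s*(ℓ*(R2*T2)))) := by ring
    linarith [hN1]
  have hdiv : ℓ - (ℓ' + b^2/T2) = (a^2*T2 - R2*b^2)/(R2*T2) := by
    rw [hrec]
    field_simp
    ring
  rw [hdiv, abs_div, abs_of_pos (mul_pos hR2pos hT2pos),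
    div_le_iff₀ (mul_pos hR2pos hT2pos)]
  exact hgoal2
end
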